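/- arXiv:1504.03313 — 5 statements merged into one kernel-verified Lean document; each statement's English description precedes it below -/
import Mathlib

section
/- Let f and g be formal (or analytic) germs fixing 0 of the form f(z) = z + a z^{p+1} + o(z^{p+1}) and g(z) = z + b z^{q+1} + o(z^{q+1}) with p, q ≥ 1. Then the commutator [f,g] := f ∘ g ∘ f⁻¹ ∘ g⁻¹ satisfies [f,g](z) = z + a b (p − q) z^{p+q+1} + o(z^{p+q+1}). -/
open Filter Asymptotics Finset

/-- Two germs are local inverses of each other near `0`. -/
def LocalInv (f f' : ℂ → ℂ) : Prop :=
  (∀ᶠ z in nhds (0:ℂ), f' (f z) = z) ∧ (∀ᶠ z in nhds (0:ℂ), f (f' z) = z)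

private lemma powO {j k : ℕ} (h : j ≤ k) :
    (fun z : ℂ => z ^ k) =O[nhds 0] fun z => z ^ j := by
  have : (fun z : ℂ => z ^ k) = fun z => z ^ (k - j) * z ^ j := by
    funext z; rw [← pow_add]; congr 1; omega
  rw [this]
  simpa using (((continuous_pow (k - j)).tendsto (0:ℂ)).isBigO_one ℂ).mul
    (isBigO_refl (fun z : ℂ => z ^ j) _)

private lemma boundO {C u : ℂ → ℂ} (hC : AnalyticAt ℂ C 0)
    (hu : Tendsto u (nhds 0) (nhds 0)) :
    (fun z => C (u z)) =O[nhds (0:ℂ)] fun _ => (1:ℂ) :=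
  ((hC.continuousAt.tendsto).comp hu).isBigO_one ℂ

private lemma lipO {C u v : ℂ → ℂ} (hC : AnalyticAt ℂ C 0)
    (hu : Tendsto u (nhds 0) (nhds 0)) (hv : Tendsto v (nhds 0) (nhds 0)) :
    (fun z => C (u z) - C (v z)) =O[nhds (0:ℂ)] fun z => u z - v z := by
  obtain ⟨K, t, ht, hlip⟩ := (hC.contDiffAt (n := 1)).exists_lipschitzOnWith
  rw [isBigO_iff]
  refine ⟨K, ?_⟩
  filter_upwards [hu.eventually_mem ht, hv.eventually_mem ht] with z h1 h2
  simpa [dist_eq_norm] using hlip.dist_le_mul _ h1 _ h2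

private lemma factorO {h : ℂ → ℂ} {n : ℕ} (hh : AnalyticAt ℂ h 0)
    (ho : h =o[nhds 0] fun z => z ^ n) :
    ∃ H : ℂ → ℂ, AnalyticAt ℂ H 0 ∧ ∀ᶠ z in nhds (0:ℂ), h z = z ^ (n + 1) * H z := by
  rcases eq_or_ne (analyticOrderAt h 0) ⊤ with htop | hne
  · refine ⟨fun _ => 0, analyticAt_const, ?_⟩
    filter_upwards [analyticOrderAt_eq_top.mp htop] with z hz
    simp [hz]
  · lift analyticOrderAt h 0 to ℕ using hne with m hm
    obtain ⟨G, hG, hG0, hGe⟩ := (hh.analyticOrderAt_eq_natCast (n := m)).mp hm.symm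
    simp only [sub_zero, smul_eq_mul] at hGe
    have hnm : n + 1 ≤ m := by
      by_contra hlt
      push_neg at hlt
      have hmn : m ≤ n := by omega
      have ho' : h =o[nhds 0] fun z => z ^ m := ho.trans_isBigO (powO hmn)
      have hG00 : G 0 = 0 := by
        have hle : ∀ ε : ℝ, 0 < ε → ‖G 0‖ ≤ ε := by
          intro ε hε
          have h1 : ∀ᶠ z in nhds (0:ℂ), ‖h z‖ ≤ ε * ‖z ^ m‖ :=
            (isLittleO_iff.mp ho') hε
          have h2 : ∀ᶠ z in nhdsWithin (0:ℂ) {(0:ℂ)}ᶜ, ‖G z‖ ≤ ε := by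
            filter_upwards [nhdsWithin_le_nhds h1, nhdsWithin_le_nhds hGe,
              self_mem_nhdsWithin] with z h1 h2 h3
            have hz : z ≠ 0 := h3
            have hzm : (0:ℝ) < ‖z ^ m‖ := by
              simp only [norm_pow]
              exact pow_pos (norm_pos_iff.mpr hz) m
            rw [h2, norm_mul] at h1
            nlinarith [norm_nonneg (G z)]
          have htend : Tendsto (fun z => ‖G z‖) (nhdsWithin (0:ℂ) {(0:ℂ)}ᶜ)
              (nhds ‖G 0‖) :=
            (hG.continuousAt.norm.continuousWithinAt).tendsto
          exact le_of_tendsto htend h2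
        have h0 : ‖G 0‖ ≤ 0 := le_of_forall_pos_le_add (by
          intro ε hε; simpa using hle ε hε)
        simpa using le_antisymm h0 (norm_nonneg _)
      exact hG0 hG00
    refine ⟨fun z => z ^ (m - (n + 1)) * G z, (analyticAt_id.pow _).mul hG, ?_⟩
    filter_upwards [hGe] with z hz
    rw [hz, ← mul_assoc, ← pow_add]
    congr 2
    omega

private lemma bootO {u base E : ℂ → ℂ} {m : ℕ} (hm : 1 ≤ m)
    (hu : Tendsto u (nhds 0) (nhds 0))
    (hE : (fun z => E (u z)) =O[nhds (0:ℂ)] fun _ => (1:ℂ))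
    (heq : ∀ᶠ z in nhds (0:ℂ), u z - base z = u z ^ (m + 1) * E (u z))
    (hbase : base =O[nhds (0:ℂ)] fun z => z) :
    u =O[nhds (0:ℂ)] fun z => z := by
  obtain ⟨c, hc⟩ := hE.isBigOWith
  rw [IsBigOWith] at hc
  set c' : ℝ := max c 1 with hc'
  have hc'1 : 1 ≤ c' := le_max_right _ _
  have hc'0 : 0 < c' := lt_of_lt_of_le one_pos hc'1
  have hcc : ∀ᶠ z in nhds (0:ℂ), ‖E (u z)‖ ≤ c' := by
    filter_upwards [hc] with z hz
    simp only [norm_one, mul_one] at hz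
    exact hz.trans (le_max_left _ _)
  set δ : ℝ := min 1 (2 * c')⁻¹ with hδ
  have hδ0 : 0 < δ := lt_min one_pos (by positivity)
  have hsmall : ∀ᶠ z in nhds (0:ℂ), ‖u z‖ ≤ δ :=
    hu.eventually (Metric.eventually_nhds_iff.mpr
      ⟨δ, hδ0, fun {y} hy => by
        simpa using (le_of_lt (by simpa [dist_eq_norm] using hy))⟩)
  have key : ∀ᶠ z in nhds (0:ℂ), ‖u z‖ ≤ 2 * ‖base z‖ := by
    filter_upwards [heq, hcc, hsmall] with z h1 h2 h3
    have hub : ‖u z - base z‖ ≤ (1/2) * ‖u z‖ := by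
      rw [h1, norm_mul, norm_pow]
      have e1 : ‖u z‖ ^ (m + 1) = ‖u z‖ * ‖u z‖ ^ m := by ring
      rw [e1]
      have e2 : ‖u z‖ ^ m ≤ δ ^ m := pow_le_pow_left₀ (norm_nonneg _) h3 m
      have e3 : δ ^ m ≤ δ := pow_le_of_le_one (le_of_lt hδ0) (min_le_left _ _) (by omega)
      have e4 : δ ≤ (2 * c')⁻¹ := min_le_right _ _
      have e5 : ‖u z‖ ^ m * ‖E (u z)‖ ≤ (2 * c')⁻¹ * c' := by
        apply mul_le_mul (e2.trans (e3.trans e4)) h2 (norm_nonneg _) (by positivity)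
      have e6 : (2 * c')⁻¹ * c' = 1/2 := by field_simp
      calc ‖u z‖ * ‖u z‖ ^ m * ‖E (u z)‖ = ‖u z‖ * (‖u z‖ ^ m * ‖E (u z)‖) := by ring
        _ ≤ ‖u z‖ * (1/2) := by
            rw [← e6] at *
            exact mul_le_mul_of_nonneg_left e5 (norm_nonneg _)
        _ = (1/2) * ‖u z‖ := by ring
    have := norm_sub_norm_le (u z) (base z)
    linarith [this.trans hub]
  have h1 : u =O[nhds (0:ℂ)] base := isBigO_iff.mpr ⟨2, by
    filter_upwards [key] with z h
    simpa using h⟩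
  exact h1.trans hbase

private lemma sumO {u v : ℂ → ℂ} (k : ℕ)
    (hu : u =O[nhds (0:ℂ)] fun z => z) (hv : v =O[nhds (0:ℂ)] fun z => z) :
    (fun z => ∑ i ∈ range k, u z ^ i * v z ^ (k - 1 - i)) =O[nhds (0:ℂ)]
      fun z => z ^ (k - 1) := by
  apply IsBigO.fun_sum
  intro i hi
  have hik : i + (k - 1 - i) = k - 1 := by
    simp only [mem_range] at hi; omega
  have := (hu.pow i).mul (hv.pow (k - 1 - i))
  simpa [← pow_add, hik] using this

private lemma powSubO {u v e : ℂ → ℂ} (k : ℕ)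
    (hu : u =O[nhds (0:ℂ)] fun z => z) (hv : v =O[nhds (0:ℂ)] fun z => z)
    (huv : (fun z => u z - v z) =O[nhds (0:ℂ)] e) :
    (fun z => u z ^ k - v z ^ k) =O[nhds (0:ℂ)] fun z => z ^ (k - 1) * e z := by
  have : (fun z => u z ^ k - v z ^ k) =
      fun z => (∑ i ∈ range k, u z ^ i * v z ^ (k - 1 - i)) * (u z - v z) := by
    funext z; rw [geom_sum₂_mul]
  rw [this]
  exact (sumO k hu hv).mul huv

private lemma idO2 {u : ℂ → ℂ} (hu2 : (fun z => u z - z) =O[nhds (0:ℂ)] fun z => z ^ 2) :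
    u =O[nhds (0:ℂ)] fun z => z := by
  have h1 : (fun z : ℂ => u z - z) =O[nhds (0:ℂ)] fun z => z := by
    have := hu2.trans (powO (j := 1) (k := 2) one_le_two)
    simpa using this
  simpa using h1.add (isBigO_refl (fun z : ℂ => z) (nhds 0))

private lemma sumRefO {u v : ℂ → ℂ} (k : ℕ)
    (hu2 : (fun z => u z - z) =O[nhds (0:ℂ)] fun z => z ^ 2)
    (hv2 : (fun z => v z - z) =O[nhds (0:ℂ)] fun z => z ^ 2) :
    (fun z => (∑ i ∈ range (k + 1), u z ^ i * v z ^ (k - i)) - ((k : ℂ) + 1) * z ^ k)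
      =O[nhds (0:ℂ)] fun z => z ^ (k + 1) := by
  have hu1 := idO2 hu2
  have hv1 := idO2 hv2
  have hid : (fun z : ℂ => z) =O[nhds (0:ℂ)] fun z => z := isBigO_refl _ _
  have hrw : (fun z => (∑ i ∈ range (k + 1), u z ^ i * v z ^ (k - i)) - ((k : ℂ) + 1) * z ^ k)
      = fun z => ∑ i ∈ range (k + 1), (u z ^ i * v z ^ (k - i) - z ^ k) := by
    funext z
    rw [Finset.sum_sub_distrib, Finset.sum_const, card_range, nsmul_eq_mul]
    push_cast
    ring
  rw [hrw]
  apply IsBigO.fun_sum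
  intro i hi
  simp only [mem_range] at hi
  have hsplit : (fun z => u z ^ i * v z ^ (k - i) - z ^ k) =
      fun z => (u z ^ i - z ^ i) * v z ^ (k - i) + z ^ i * (v z ^ (k - i) - z ^ (k - i)) := by
    funext z
    have : z ^ i * z ^ (k - i) = z ^ k := by rw [← pow_add]; congr 1; omega
    rw [← this]; ring
  rw [hsplit]
  have hA : (fun z => (u z ^ i - z ^ i) * v z ^ (k - i)) =O[nhds (0:ℂ)]
      fun z => z ^ (k + 1) := by
    have h1 := (powSubO i hu1 hid hu2).mul (hv1.pow (k - i))
    refine h1.trans ?_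
    have := powO (j := k + 1) (k := (i - 1) + 2 + (k - i)) (by omega)
    simpa [pow_add, mul_assoc] using this
  have hB : (fun z => z ^ i * (v z ^ (k - i) - z ^ (k - i))) =O[nhds (0:ℂ)]
      fun z => z ^ (k + 1) := by
    have h1 := (hid.pow i).mul (powSubO (k - i) hv1 hid hv2)
    refine h1.trans ?_
    have := powO (j := k + 1) (k := i + ((k - i - 1) + 2)) (by omega)
    simpa [pow_add, mul_assoc] using this
  exact hA.add hB

private lemma powSubRefO {u v e : ℂ → ℂ} (k : ℕ)
    (hu2 : (fun z => u z - z) =O[nhds (0:ℂ)] fun z => z ^ 2)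
    (hv2 : (fun z => v z - z) =O[nhds (0:ℂ)] fun z => z ^ 2)
    (huv : (fun z => u z - v z) =O[nhds (0:ℂ)] e) :
    (fun z => (u z ^ (k + 1) - v z ^ (k + 1)) - ((k : ℂ) + 1) * z ^ k * (u z - v z))
      =O[nhds (0:ℂ)] fun z => z ^ (k + 1) * e z := by
  have hrw : (fun z => (u z ^ (k + 1) - v z ^ (k + 1)) - ((k : ℂ) + 1) * z ^ k * (u z - v z))
      = fun z => ((∑ i ∈ range (k + 1), u z ^ i * v z ^ (k + 1 - 1 - i)) - ((k : ℂ) + 1) * z ^ k)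
          * (u z - v z) := by
    funext z
    rw [sub_mul, geom_sum₂_mul]
  rw [hrw]
  have hsum : (fun z => (∑ i ∈ range (k + 1), u z ^ i * v z ^ (k + 1 - 1 - i))
      - ((k : ℂ) + 1) * z ^ k) =O[nhds (0:ℂ)] fun z => z ^ (k + 1) := by
    have := sumRefO k hu2 hv2
    simpa using this
  exact hsum.mul huv

private lemma toPow {f : ℂ → ℂ} {s t n : ℕ} (h : f =O[nhds (0:ℂ)] fun z => z ^ s * z ^ t)
    (hn : n ≤ s + t) : f =O[nhds (0:ℂ)] fun z => z ^ n :=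
  h.trans (by simpa [pow_add] using powO (j := n) (k := s + t) hn)

/-- If `f(z) = z + a z^(p+1) + o(z^(p+1))` and
`g(z) = z + b z^(q+1) + o(z^(q+1))` are parabolic germs, then their commutator
`[f,g] = f ∘ g ∘ f⁻¹ ∘ g⁻¹` satisfies
`[f,g](z) = z + a b (p-q) z^(p+q+1) + o(z^(p+q+1))`. -/
theorem commutator_leading_term
    (f g fi gi : ℂ → ℂ) (a b : ℂ) (p q : ℕ) (hp : 1 ≤ p) (hq : 1 ≤ q)
    (hfa : AnalyticAt ℂ f 0) (hga : AnalyticAt ℂ g 0)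
    (hfia : AnalyticAt ℂ fi 0) (hgia : AnalyticAt ℂ gi 0)
    (hf0 : f 0 = 0) (hg0 : g 0 = 0)
    (hfi : LocalInv f fi) (hgi : LocalInv g gi)
    (hf : (fun z => f z - (z + a * z ^ (p + 1))) =o[nhds 0] fun z => z ^ (p + 1))
    (hg : (fun z => g z - (z + b * z ^ (q + 1))) =o[nhds 0] fun z => z ^ (q + 1)) :
    (fun z => f (g (fi (gi z))) - (z + a * b * ((p : ℂ) - q) * z ^ (p + q + 1)))
      =o[nhds 0] fun z => z ^ (p + q + 1) := by
  have hid : (fun z : ℂ => z) =O[nhds (0:ℂ)] fun z => z := isBigO_refl _ _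
  -- basic values and tendstos
  have hgi0 : gi 0 = 0 := by have := hgi.1.self_of_nhds; rwa [hg0] at this
  have hfi0 : fi 0 = 0 := by have := hfi.1.self_of_nhds; rwa [hf0] at this
  have tg : Tendsto g (nhds 0) (nhds 0) := by
    have := hga.continuousAt.tendsto; rwa [hg0] at this
  have tfi : Tendsto fi (nhds 0) (nhds 0) := by
    have := hfia.continuousAt.tendsto; rwa [hfi0] at this
  have tgi : Tendsto gi (nhds 0) (nhds 0) := by
    have := hgia.continuousAt.tendsto; rwa [hgi0] at this
  have tv : Tendsto (fun z => fi (gi z)) (nhds 0) (nhds 0) := tfi.comp tgi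
  have tv' : Tendsto (fun z => g (fi (gi z))) (nhds 0) (nhds 0) := tg.comp tv
  -- factorizations of the remainders
  have hAan : AnalyticAt ℂ (fun z => f z - (z + a * z ^ (p + 1))) 0 :=
    hfa.sub (analyticAt_id.add (analyticAt_const.mul (analyticAt_id.pow _)))
  have hBan : AnalyticAt ℂ (fun z => g z - (z + b * z ^ (q + 1))) 0 :=
    hga.sub (analyticAt_id.add (analyticAt_const.mul (analyticAt_id.pow _)))
  obtain ⟨A₂, hA2a, hA2⟩ := factorO hAan hf
  obtain ⟨B₂, hB2a, hB2⟩ := factorO hBan hg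
  -- bootstrap for gi
  have hEgan : AnalyticAt ℂ (fun u => -(b + u * B₂ u)) 0 :=
    (analyticAt_const.add (analyticAt_id.mul hB2a)).neg
  have heqw : (fun z => gi z - z) =ᶠ[nhds (0:ℂ)]
      fun z => gi z ^ (q + 1) * -(b + gi z * B₂ (gi z)) := by
    filter_upwards [hgi.2, tgi.eventually hB2] with z e1 e6
    linear_combination e1 - e6
  have hwO : gi =O[nhds (0:ℂ)] fun z => z :=
    bootO hq tgi (boundO hEgan tgi) heqw hid
  have hw1 : (fun z => gi z - z) =O[nhds (0:ℂ)] fun z => z ^ (q + 1) := by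
    refine heqw.trans_isBigO ?_
    have := (hwO.pow (q + 1)).mul (boundO hEgan tgi)
    simpa using this
  have hw2 : (fun z => gi z - z) =O[nhds (0:ℂ)] fun z => z ^ 2 :=
    hw1.trans (powO (by omega))
  -- bootstrap for v = fi ∘ gi
  have hEfan : AnalyticAt ℂ (fun u => -(a + u * A₂ u)) 0 :=
    (analyticAt_const.add (analyticAt_id.mul hA2a)).neg
  have heqv : (fun z => fi (gi z) - gi z) =ᶠ[nhds (0:ℂ)]
      fun z => fi (gi z) ^ (p + 1) * -(a + fi (gi z) * A₂ (fi (gi z))) := by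
    filter_upwards [tgi.eventually hfi.2, tv.eventually hA2] with z e2 e4
    linear_combination e2 - e4
  have hvO : (fun z => fi (gi z)) =O[nhds (0:ℂ)] fun z => z :=
    bootO hp tv (boundO hEfan tv) heqv hwO
  have hv1 : (fun z => fi (gi z) - gi z) =O[nhds (0:ℂ)] fun z => z ^ (p + 1) := by
    refine heqv.trans_isBigO ?_
    have := (hvO.pow (p + 1)).mul (boundO hEfan tv)
    simpa using this
  have hv2 : (fun z => fi (gi z) - z) =O[nhds (0:ℂ)] fun z => z ^ 2 := by
    have := (hv1.trans (powO (by omega : 2 ≤ p + 1))).add hw2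
    simpa [sub_add_sub_cancel] using this
  -- v' = g ∘ fi ∘ gi
  have hv'veq : (fun z => g (fi (gi z)) - fi (gi z)) =ᶠ[nhds (0:ℂ)]
      fun z => b * fi (gi z) ^ (q + 1) + fi (gi z) ^ (q + 1 + 1) * B₂ (fi (gi z)) := by
    filter_upwards [tv.eventually hB2] with z e5
    linear_combination e5
  have hv'vO : (fun z => g (fi (gi z)) - fi (gi z)) =O[nhds (0:ℂ)] fun z => z ^ (q + 1) := by
    refine hv'veq.trans_isBigO (IsBigO.add ?_ ?_)
    · exact (hvO.pow (q + 1)).const_mul_left b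
    · have := (hvO.pow (q + 1 + 1)).mul (boundO hB2a tv)
      simp only [mul_one] at this
      exact this.trans (powO (by omega))
  have hv'2 : (fun z => g (fi (gi z)) - z) =O[nhds (0:ℂ)] fun z => z ^ 2 := by
    have := (hv'vO.trans (powO (by omega : 2 ≤ q + 1))).add hv2
    simpa [sub_add_sub_cancel] using this
  have hv'O : (fun z => g (fi (gi z))) =O[nhds (0:ℂ)] fun z => z := idO2 hv'2
  -- refined expansions
  have hv'vmain : (fun z => (g (fi (gi z)) - fi (gi z)) - b * z ^ (q + 1))
      =O[nhds (0:ℂ)] fun z => z ^ (q + 2) := by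
    have heq : (fun z => (g (fi (gi z)) - fi (gi z)) - b * z ^ (q + 1)) =ᶠ[nhds (0:ℂ)]
        fun z => b * (fi (gi z) ^ (q + 1) - z ^ (q + 1))
          + fi (gi z) ^ (q + 1 + 1) * B₂ (fi (gi z)) := by
      filter_upwards [tv.eventually hB2] with z e5
      linear_combination e5
    refine heq.trans_isBigO (IsBigO.add ?_ ?_)
    · exact toPow (((powSubO (q + 1) hvO hid hv2).const_mul_left b)) (by omega)
    · have := (hvO.pow (q + 1 + 1)).mul (boundO hB2a tv)
      simp only [mul_one] at this
      exact this.trans (powO (by omega))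
  have hvwmain : (fun z => (fi (gi z) - gi z) + a * z ^ (p + 1))
      =O[nhds (0:ℂ)] fun z => z ^ (p + 2) := by
    have heq : (fun z => (fi (gi z) - gi z) + a * z ^ (p + 1)) =ᶠ[nhds (0:ℂ)]
        fun z => -(a * (fi (gi z) ^ (p + 1) - z ^ (p + 1)))
          - fi (gi z) ^ (p + 1 + 1) * A₂ (fi (gi z)) := by
      filter_upwards [tgi.eventually hfi.2, tv.eventually hA2] with z e2 e4
      linear_combination e2 - e4
    refine heq.trans_isBigO (IsBigO.sub ?_ ?_)
    · exact (toPow (((powSubO (p + 1) hvO hid hv2).const_mul_left a)) (by omega)).neg_left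
    · have := (hvO.pow (p + 1 + 1)).mul (boundO hA2a tv)
      simp only [mul_one] at this
      exact this.trans (powO (by omega))
  -- the four brackets
  have hT1 : (fun z => a * (g (fi (gi z)) ^ (p + 1) - fi (gi z) ^ (p + 1))
      - a * b * ((p : ℂ) + 1) * z ^ (p + q + 1)) =O[nhds (0:ℂ)] fun z => z ^ (p + q + 2) := by
    have hrw : (fun z => a * (g (fi (gi z)) ^ (p + 1) - fi (gi z) ^ (p + 1))
        - a * b * ((p : ℂ) + 1) * z ^ (p + q + 1))
        = fun z => a * ((g (fi (gi z)) ^ (p + 1) - fi (gi z) ^ (p + 1))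
            - ((p : ℂ) + 1) * z ^ p * (g (fi (gi z)) - fi (gi z)))
          + a * ((p : ℂ) + 1) * (z ^ p * ((g (fi (gi z)) - fi (gi z)) - b * z ^ (q + 1))) := by
      funext z; ring
    rw [hrw]
    refine IsBigO.add ?_ ?_
    · exact toPow ((powSubRefO p hv'2 hv2 hv'vO).const_mul_left a) (by omega)
    · exact toPow (((isBigO_refl (fun z : ℂ => z ^ p) _).mul hv'vmain).const_mul_left
        (a * ((p : ℂ) + 1))) (by omega)
  have hT2 : (fun z => g (fi (gi z)) ^ (p + 1 + 1) * A₂ (g (fi (gi z)))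
      - fi (gi z) ^ (p + 1 + 1) * A₂ (fi (gi z))) =O[nhds (0:ℂ)] fun z => z ^ (p + q + 2) := by
    have hrw : (fun z => g (fi (gi z)) ^ (p + 1 + 1) * A₂ (g (fi (gi z)))
        - fi (gi z) ^ (p + 1 + 1) * A₂ (fi (gi z)))
        = fun z => (g (fi (gi z)) ^ (p + 1 + 1) - fi (gi z) ^ (p + 1 + 1)) * A₂ (g (fi (gi z)))
          + fi (gi z) ^ (p + 1 + 1) * (A₂ (g (fi (gi z))) - A₂ (fi (gi z))) := by
      funext z; ring
    rw [hrw]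
    refine IsBigO.add ?_ ?_
    · have := (powSubO (p + 1 + 1) hv'O hvO hv'vO).mul (boundO hA2a tv')
      simp only [mul_one] at this
      exact toPow this (by omega)
    · exact toPow ((hvO.pow (p + 1 + 1)).mul ((lipO hA2a tv' tv).trans hv'vO)) (by omega)
  have hT3 : (fun z => b * (fi (gi z) ^ (q + 1) - gi z ^ (q + 1))
      + a * b * ((q : ℂ) + 1) * z ^ (p + q + 1)) =O[nhds (0:ℂ)] fun z => z ^ (p + q + 2) := by
    have hrw : (fun z => b * (fi (gi z) ^ (q + 1) - gi z ^ (q + 1))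
        + a * b * ((q : ℂ) + 1) * z ^ (p + q + 1))
        = fun z => b * ((fi (gi z) ^ (q + 1) - gi z ^ (q + 1))
            - ((q : ℂ) + 1) * z ^ q * (fi (gi z) - gi z))
          + b * ((q : ℂ) + 1) * (z ^ q * ((fi (gi z) - gi z) + a * z ^ (p + 1))) := by
      funext z; ring
    rw [hrw]
    refine IsBigO.add ?_ ?_
    · exact toPow ((powSubRefO q hv2 hw2 hv1).const_mul_left b) (by omega)
    · exact toPow (((isBigO_refl (fun z : ℂ => z ^ q) _).mul hvwmain).const_mul_left
        (b * ((q : ℂ) + 1))) (by omega)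
  have hT4 : (fun z => fi (gi z) ^ (q + 1 + 1) * B₂ (fi (gi z))
      - gi z ^ (q + 1 + 1) * B₂ (gi z)) =O[nhds (0:ℂ)] fun z => z ^ (p + q + 2) := by
    have hrw : (fun z => fi (gi z) ^ (q + 1 + 1) * B₂ (fi (gi z))
        - gi z ^ (q + 1 + 1) * B₂ (gi z))
        = fun z => (fi (gi z) ^ (q + 1 + 1) - gi z ^ (q + 1 + 1)) * B₂ (fi (gi z))
          + gi z ^ (q + 1 + 1) * (B₂ (fi (gi z)) - B₂ (gi z)) := by
      funext z; ring
    rw [hrw]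
    refine IsBigO.add ?_ ?_
    · have := (powSubO (q + 1 + 1) hvO hwO hv1).mul (boundO hB2a tv)
      simp only [mul_one] at this
      exact toPow this (by omega)
    · exact toPow ((hwO.pow (q + 1 + 1)).mul ((lipO hB2a tv tgi).trans hv1)) (by omega)
  -- the exact identity
  have hident : (fun z => f (g (fi (gi z))) - (z + a * b * ((p : ℂ) - q) * z ^ (p + q + 1)))
      =ᶠ[nhds (0:ℂ)]
      fun z => (a * (g (fi (gi z)) ^ (p + 1) - fi (gi z) ^ (p + 1))
          - a * b * ((p : ℂ) + 1) * z ^ (p + q + 1))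
        + (g (fi (gi z)) ^ (p + 1 + 1) * A₂ (g (fi (gi z)))
          - fi (gi z) ^ (p + 1 + 1) * A₂ (fi (gi z)))
        + (b * (fi (gi z) ^ (q + 1) - gi z ^ (q + 1))
          + a * b * ((q : ℂ) + 1) * z ^ (p + q + 1))
        + (fi (gi z) ^ (q + 1 + 1) * B₂ (fi (gi z))
          - gi z ^ (q + 1 + 1) * B₂ (gi z)) := by
    filter_upwards [hgi.2, tgi.eventually hfi.2, tv'.eventually hA2, tv.eventually hA2,
      tv.eventually hB2, tgi.eventually hB2] with z e1 e2 e3 e4 e5 e6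
    linear_combination e3 + e5 - e4 - e6 + e2 + e1
  refine hident.trans_isLittleO ?_
  have hsum := ((hT1.add hT2).add hT3).add hT4
  exact hsum.trans_isLittleO (isLittleO_pow_pow (by omega))
end

section
/- Let f and g be parabolic germs with f(z) = z + a z^{p+1} + o(z^{p+1}), a ≠ 0, and g(z) = z + b z^{q+1} + o(z^{q+1}), b ≠ 0, where p ≠ q. Then the commutator [f,g] belongs to A_{p+q}, i.e. [f,g](z) = z + c z^{p+q+1} + o(z^{p+q+1}) with c = ab(p−q) ≠ 0. -/
open Filter Asymptotics

section Helpers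

open Topology Finset

lemma div_pow_of_littleO {h : ℂ → ℂ} {n : ℕ} (hh : AnalyticAt ℂ h 0)
    (ho : h =o[nhds 0] fun z => z ^ n) :
    ∃ H : ℂ → ℂ, AnalyticAt ℂ H 0 ∧ ∀ᶠ z in nhds 0, h z = z ^ (n + 1) * H z := by
  by_cases htop : ∀ᶠ z in nhds (0:ℂ), h z = 0
  · exact ⟨fun _ => 0, analyticAt_const, htop.mono fun z hz => by simp [hz]⟩
  · obtain ⟨k, hk⟩ : ∃ k : ℕ, analyticOrderAt h 0 = (k : ℕ∞) := by
      have hne : analyticOrderAt h 0 ≠ ⊤ := fun ht => htop (analyticOrderAt_eq_top.mp ht)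
      obtain ⟨k, hk⟩ := WithTop.ne_top_iff_exists.mp hne
      exact ⟨k, hk.symm⟩
    obtain ⟨u, hu, hu0, hhu⟩ := (hh.analyticOrderAt_eq_natCast (n := k)).mp hk
    have hhu' : ∀ᶠ z in nhds (0:ℂ), h z = z ^ k * u z := by
      filter_upwards [hhu] with z hz
      simpa [smul_eq_mul] using hz
    have hkn : n + 1 ≤ k := by
      by_contra hlt
      push_neg at hlt
      have hkle : k ≤ n := Nat.lt_succ_iff.mp hlt
      have h1 : (fun z : ℂ => z ^ k * u z) =o[nhds 0] fun z => z ^ n :=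
        ho.congr' (by filter_upwards [hhu'] with z hz using hz) EventuallyEq.rfl
      have h2 : (fun z : ℂ => z ^ n) =O[nhds 0] fun z => z ^ k := by
        rw [isBigO_iff]
        refine ⟨1, ?_⟩
        have hball : ∀ᶠ z : ℂ in nhds 0, ‖z‖ ≤ 1 := by
          filter_upwards [Metric.ball_mem_nhds (0:ℂ) one_pos] with z hz
          exact (mem_ball_zero_iff.mp hz).le
        filter_upwards [hball] with z hz
        simp only [norm_pow, one_mul]
        exact pow_le_pow_of_le_one (norm_nonneg z) hz hkle
      have h3 : (fun z : ℂ => z ^ k * u z) =o[nhds 0] fun z => z ^ k :=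
        h1.trans_isBigO h2
      have h4 : Tendsto u (𝓝[≠] (0:ℂ)) (nhds 0) := by
        rw [← isLittleO_one_iff ℝ]
        rw [isLittleO_iff] at h3 ⊢
        intro c hc
        have h6 : ∀ᶠ x in 𝓝[≠] (0:ℂ), ‖x ^ k * u x‖ ≤ c * ‖x ^ k‖ :=
          (h3 hc).filter_mono nhdsWithin_le_nhds
        filter_upwards [h6, self_mem_nhdsWithin] with z hz hz0
        have hz0' : (z : ℂ) ^ k ≠ 0 := pow_ne_zero _ hz0
        have hpos : 0 < ‖(z:ℂ) ^ k‖ := norm_pos_iff.mpr hz0'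
        rw [norm_mul] at hz
        have h7 : ‖u z‖ * ‖z ^ k‖ ≤ c * ‖z ^ k‖ := by
          rw [mul_comm] at hz; exact hz
        simpa using le_of_mul_le_mul_right h7 hpos
      have h5 : Tendsto u (𝓝[≠] (0:ℂ)) (nhds (u 0)) :=
        (hu.continuousAt.continuousWithinAt).tendsto
      exact hu0 (tendsto_nhds_unique h5 h4)
    refine ⟨fun z => z ^ (k - (n + 1)) * u z, ((analyticAt_id).pow _).mul hu, ?_⟩
    filter_upwards [hhu'] with z hz
    rw [hz, ← mul_assoc, ← pow_add, Nat.add_sub_cancel' hkn]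

lemma factor_A {f : ℂ → ℂ} {a : ℂ} {p : ℕ} (hfa : AnalyticAt ℂ f 0)
    (hf : (fun z => f z - (z + a * z ^ (p + 1))) =o[nhds 0] fun z => z ^ (p + 1)) :
    ∃ F : ℂ → ℂ, AnalyticAt ℂ F 0 ∧ F 0 = a ∧
      ∀ᶠ z in nhds 0, f z = z + z ^ (p + 1) * F z := by
  have hh : AnalyticAt ℂ (fun z => f z - (z + a * z ^ (p + 1))) 0 :=
    hfa.sub ((analyticAt_id).add (analyticAt_const.mul ((analyticAt_id).pow _)))
  obtain ⟨H, hH, hHe⟩ := div_pow_of_littleO hh hf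
  refine ⟨fun z => a + z * H z, analyticAt_const.add ((analyticAt_id).mul hH), by simp, ?_⟩
  filter_upwards [hHe] with z hz
  have : f z - (z + a * z ^ (p + 1)) = z ^ (p + 1 + 1) * H z := hz
  linear_combination this

lemma pow_succ_littleO (n : ℕ) :
    (fun z : ℂ => z ^ (n + 1)) =o[nhds 0] fun z => z ^ n := by
  have h1 : (fun z : ℂ => z) =o[nhds (0:ℂ)] (fun _ => (1 : ℂ)) :=
    (isLittleO_one_iff ℂ).mpr tendsto_id
  have h2 := (isBigO_refl (fun z : ℂ => z ^ n) (nhds 0)).mul_isLittleO h1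
  exact h2.congr (fun z => by ring) (fun z => by ring)

lemma core_comm {f g F G : ℂ → ℂ} {a b : ℂ} {p q : ℕ} (hp : 1 ≤ p) (hq : 1 ≤ q)
    (hFa : AnalyticAt ℂ F 0) (hGa : AnalyticAt ℂ G 0) (hF0 : F 0 = a) (hG0 : G 0 = b)
    (hfe : ∀ᶠ z in nhds (0:ℂ), f z = z + z ^ (p + 1) * F z)
    (hge : ∀ᶠ z in nhds (0:ℂ), g z = z + z ^ (q + 1) * G z) :
    (fun w => f (g w) - g (f w) - (a * b * ((p : ℂ) - q)) * w ^ (p + q + 1))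
      =o[nhds 0] fun w => w ^ (p + q + 1) := by
  set c : ℂ := a * b * ((p : ℂ) - q) with hc
  have hcF : ContinuousAt F 0 := hFa.continuousAt
  have hcG : ContinuousAt G 0 := hGa.continuousAt
  have hfeq : f =ᶠ[nhds (0:ℂ)] fun z => z + z ^ (p + 1) * F z := hfe
  have hgeq : g =ᶠ[nhds (0:ℂ)] fun z => z + z ^ (q + 1) * G z := hge
  have hcf : ContinuousAt f 0 :=
    ((continuousAt_id.add ((continuousAt_id.pow _).mul hcF))).congr hfeq.symm
  have hcg : ContinuousAt g 0 :=
    ((continuousAt_id.add ((continuousAt_id.pow _).mul hcG))).congr hgeq.symm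
  have hf0 : f 0 = 0 := by have := hfe.self_of_nhds; simpa using this
  have hg0 : g 0 = 0 := by have := hge.self_of_nhds; simpa using this
  have htf : Tendsto f (nhds 0) (nhds 0) := by
    have := hcf.tendsto; rwa [hf0] at this
  have htg : Tendsto g (nhds 0) (nhds 0) := by
    have := hcg.tendsto; rwa [hg0] at this
  have hgid : (fun w => g w - w) =O[nhds 0] fun w => w ^ (q + 1) := by
    have h1 : (fun w : ℂ => w ^ (q+1) * G w) =O[nhds 0] fun w => w ^ (q+1) * 1 :=
      (isBigO_refl _ _).mul (hcG.tendsto.isBigO_one ℂ)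
    refine (h1.congr (fun w => rfl) (fun w => by ring)).congr' ?_ EventuallyEq.rfl
    filter_upwards [hge] with w hw
    rw [hw]; ring
  have hfid : (fun w => f w - w) =O[nhds 0] fun w => w ^ (p + 1) := by
    have h1 : (fun w : ℂ => w ^ (p+1) * F w) =O[nhds 0] fun w => w ^ (p+1) * 1 :=
      (isBigO_refl _ _).mul (hcF.tendsto.isBigO_one ℂ)
    refine (h1.congr (fun w => rfl) (fun w => by ring)).congr' ?_ EventuallyEq.rfl
    filter_upwards [hfe] with w hw
    rw [hw]; ring
  have hFlip : (fun w => F (g w) - F w) =O[nhds 0] fun w => g w - w := by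
    obtain ⟨K, t, ht, hlip⟩ := (hFa.contDiffAt (n := 1)).exists_lipschitzOnWith
    rw [isBigO_iff]
    refine ⟨K, ?_⟩
    have h1 : ∀ᶠ w in nhds (0:ℂ), g w ∈ t := htg.eventually_mem ht
    filter_upwards [h1, ht] with w h1w h2w
    have := hlip.dist_le_mul _ h1w _ h2w
    rwa [dist_eq_norm, dist_eq_norm] at this
  have hGlip : (fun w => G (f w) - G w) =O[nhds 0] fun w => f w - w := by
    obtain ⟨K, t, ht, hlip⟩ := (hGa.contDiffAt (n := 1)).exists_lipschitzOnWith
    rw [isBigO_iff]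
    refine ⟨K, ?_⟩
    have h1 : ∀ᶠ w in nhds (0:ℂ), f w ∈ t := htf.eventually_mem ht
    filter_upwards [h1, ht] with w h1w h2w
    have := hlip.dist_le_mul _ h1w _ h2w
    rwa [dist_eq_norm, dist_eq_norm] at this
  -- the bracket function and its limit
  have hE1 : Tendsto (fun w : ℂ => ∑ i ∈ range (p + 1), (1 + w ^ q * G w) ^ i)
      (nhds 0) (nhds ((p : ℂ) + 1)) := by
    have hbase : Tendsto (fun w : ℂ => 1 + w ^ q * G w) (nhds 0) (nhds 1) := by
      have h2 : Tendsto (fun w : ℂ => w ^ q * G w) (nhds 0) (nhds (0 ^ q * G 0)) :=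
        ((continuousAt_id.pow q).mul hcG).tendsto
      have h3 : (0:ℂ) ^ q * G 0 = 0 := by
        rw [zero_pow (by omega), zero_mul]
      rw [h3] at h2
      simpa using tendsto_const_nhds.add h2
    have h4 : Tendsto (fun w : ℂ => ∑ i ∈ range (p + 1), (1 + w ^ q * G w) ^ i)
        (nhds 0) (nhds (∑ i ∈ range (p + 1), (1:ℂ) ^ i)) :=
      tendsto_finset_sum _ fun i _ => (by simpa using hbase.pow i)
    have h5 : (∑ i ∈ range (p + 1), (1:ℂ) ^ i) = (p : ℂ) + 1 := by
      simp [Finset.sum_const]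
    rwa [h5] at h4
  have hE2 : Tendsto (fun w : ℂ => ∑ i ∈ range (q + 1), (1 + w ^ p * F w) ^ i)
      (nhds 0) (nhds ((q : ℂ) + 1)) := by
    have hbase : Tendsto (fun w : ℂ => 1 + w ^ p * F w) (nhds 0) (nhds 1) := by
      have h2 : Tendsto (fun w : ℂ => w ^ p * F w) (nhds 0) (nhds (0 ^ p * F 0)) :=
        ((continuousAt_id.pow p).mul hcF).tendsto
      have h3 : (0:ℂ) ^ p * F 0 = 0 := by
        rw [zero_pow (by omega), zero_mul]
      rw [h3] at h2
      simpa using tendsto_const_nhds.add h2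
    have h4 : Tendsto (fun w : ℂ => ∑ i ∈ range (q + 1), (1 + w ^ p * F w) ^ i)
        (nhds 0) (nhds (∑ i ∈ range (q + 1), (1:ℂ) ^ i)) :=
      tendsto_finset_sum _ fun i _ => (by simpa using hbase.pow i)
    have h5 : (∑ i ∈ range (q + 1), (1:ℂ) ^ i) = (q : ℂ) + 1 := by
      simp [Finset.sum_const]
    rwa [h5] at h4
  have hFg : Tendsto (fun w => F (g w)) (nhds 0) (nhds a) := by
    have := hcF.tendsto.comp htg; rwa [hF0] at this
  have hGf : Tendsto (fun w => G (f w)) (nhds 0) (nhds b) := by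
    have := hcG.tendsto.comp htf; rwa [hG0] at this
  have hGw : Tendsto G (nhds (0:ℂ)) (nhds b) := by
    have := hcG.tendsto; rwa [hG0] at this
  have hFw : Tendsto F (nhds (0:ℂ)) (nhds a) := by
    have := hcF.tendsto; rwa [hF0] at this
  have htΦ : Tendsto (fun w : ℂ =>
      G w * (∑ i ∈ range (p + 1), (1 + w ^ q * G w) ^ i) * F (g w)
        - F w * (∑ i ∈ range (q + 1), (1 + w ^ p * F w) ^ i) * G (f w))
      (nhds 0) (nhds c) := by
    have h6 : Tendsto (fun w : ℂ =>
        G w * (∑ i ∈ range (p + 1), (1 + w ^ q * G w) ^ i) * F (g w)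
          - F w * (∑ i ∈ range (q + 1), (1 + w ^ p * F w) ^ i) * G (f w))
        (nhds 0) (nhds (b * ((p:ℂ)+1) * a - a * ((q:ℂ)+1) * b)) :=
      ((hGw.mul hE1).mul hFg).sub ((hFw.mul hE2).mul hGf)
    have h7 : b * ((p:ℂ)+1) * a - a * ((q:ℂ)+1) * b = c := by rw [hc]; ring
    rwa [h7] at h6
  have hΦo : (fun w : ℂ =>
      (G w * (∑ i ∈ range (p + 1), (1 + w ^ q * G w) ^ i) * F (g w)
        - F w * (∑ i ∈ range (q + 1), (1 + w ^ p * F w) ^ i) * G (f w)) - c)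
      =o[nhds 0] (fun _ => (1:ℂ)) := by
    rw [isLittleO_one_iff]
    simpa using htΦ.sub_const c
  have T1 : (fun w : ℂ => w ^ (p + q + 1) *
      ((G w * (∑ i ∈ range (p + 1), (1 + w ^ q * G w) ^ i) * F (g w)
        - F w * (∑ i ∈ range (q + 1), (1 + w ^ p * F w) ^ i) * G (f w)) - c))
      =o[nhds 0] fun w => w ^ (p + q + 1) := by
    have := (isBigO_refl (fun w : ℂ => w ^ (p + q + 1)) (nhds 0)).mul_isLittleO hΦo
    exact this.congr (fun w => rfl) (fun w => by ring)
  have T2 : (fun w : ℂ => w ^ (p + 1) * (F (g w) - F w))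
      =o[nhds 0] fun w => w ^ (p + q + 1) := by
    have h8 : (fun w : ℂ => w ^ (p + 1) * (F (g w) - F w))
        =O[nhds 0] fun w => w ^ (p + 1) * w ^ (q + 1) :=
      (isBigO_refl _ _).mul (hFlip.trans hgid)
    have h9 : (fun w : ℂ => w ^ (p + 1) * w ^ (q + 1))
        = fun w : ℂ => w ^ (p + q + 1 + 1) := by
      funext w; rw [← pow_add]; congr 1; omega
    rw [h9] at h8
    exact h8.trans_isLittleO (pow_succ_littleO (p + q + 1))
  have T3 : (fun w : ℂ => w ^ (q + 1) * (G (f w) - G w))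
      =o[nhds 0] fun w => w ^ (p + q + 1) := by
    have h8 : (fun w : ℂ => w ^ (q + 1) * (G (f w) - G w))
        =O[nhds 0] fun w => w ^ (q + 1) * w ^ (p + 1) :=
      (isBigO_refl _ _).mul (hGlip.trans hfid)
    have h9 : (fun w : ℂ => w ^ (q + 1) * w ^ (p + 1))
        = fun w : ℂ => w ^ (p + q + 1 + 1) := by
      funext w; rw [← pow_add]; congr 1; omega
    rw [h9] at h8
    exact h8.trans_isLittleO (pow_succ_littleO (p + q + 1))
  -- key algebraic identity
  have hfgw : ∀ᶠ w in nhds (0:ℂ), f (g w) = g w + (g w) ^ (p + 1) * F (g w) :=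
    htg.eventually hfe
  have hgfw : ∀ᶠ w in nhds (0:ℂ), g (f w) = f w + (f w) ^ (q + 1) * G (f w) :=
    htf.eventually hge
  have hkey : ∀ᶠ w in nhds (0:ℂ), f (g w) - g (f w) - c * w ^ (p + q + 1)
      = w ^ (p + q + 1) *
          ((G w * (∑ i ∈ range (p + 1), (1 + w ^ q * G w) ^ i) * F (g w)
            - F w * (∑ i ∈ range (q + 1), (1 + w ^ p * F w) ^ i) * G (f w)) - c)
        + (w ^ (p + 1) * (F (g w) - F w) - w ^ (q + 1) * (G (f w) - G w)) := by
    filter_upwards [hfe, hge, hfgw, hgfw] with w e1 e2 e3 e4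
    have e5 : (1 + w ^ q * G w) ^ (p + 1)
        = 1 + (∑ i ∈ range (p + 1), (1 + w ^ q * G w) ^ i) * (w ^ q * G w) := by
      have h := geom_sum_mul (1 + w ^ q * G w) (p + 1)
      linear_combination -h
    have e6 : (1 + w ^ p * F w) ^ (q + 1)
        = 1 + (∑ i ∈ range (q + 1), (1 + w ^ p * F w) ^ i) * (w ^ p * F w) := by
      have h := geom_sum_mul (1 + w ^ p * F w) (q + 1)
      linear_combination -h
    have egw : g w = w * (1 + w ^ q * G w) := by rw [e2]; ring
    have efw : f w = w * (1 + w ^ p * F w) := by rw [e1]; ring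
    rw [e3, e4, egw, efw, mul_pow, mul_pow, e5, e6]
    ring
  have hkey' : (fun w : ℂ => f (g w) - g (f w) - c * w ^ (p + q + 1)) =ᶠ[nhds 0]
      (fun w : ℂ => w ^ (p + q + 1) *
          ((G w * (∑ i ∈ range (p + 1), (1 + w ^ q * G w) ^ i) * F (g w)
            - F w * (∑ i ∈ range (q + 1), (1 + w ^ p * F w) ^ i) * G (f w)) - c)
        + (w ^ (p + 1) * (F (g w) - F w) - w ^ (q + 1) * (G (f w) - G w))) := hkey
  have hfin := (T1.add (T2.sub T3)).congr' hkey'.symm EventuallyEq.rfl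
  exact hfin

-- z^(p+1) * F z  = o(z) when F is bounded (tendsto) and p ≥ 1
lemma pow_mul_littleO_id {F : ℂ → ℂ} {v : ℂ} {p : ℕ} (hp : 1 ≤ p)
    (hF : Tendsto F (nhds (0:ℂ)) (nhds v)) :
    (fun z : ℂ => z ^ (p + 1) * F z) =o[nhds 0] fun z => z := by
  have h1 : (fun z : ℂ => z ^ p) =o[nhds 0] (fun _ => (1:ℂ)) := by
    rw [isLittleO_one_iff]
    have := (continuous_pow p).tendsto (0:ℂ)
    simpa [zero_pow (by omega : p ≠ 0)] using this
  have h2 : (fun z : ℂ => z ^ (p + 1)) =o[nhds 0] fun z : ℂ => z := by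
    have := (isBigO_refl (fun z : ℂ => z) (nhds 0)).mul_isLittleO h1
    exact this.congr (fun z => by ring) (fun z => by ring)
  have h3 := h2.mul_isBigO (hF.isBigO_one ℂ)
  exact h3.congr (fun z => rfl) (fun z => by ring)

lemma inv_tangent {f fi : ℂ → ℂ} (hfo : (fun z => f z - z) =o[nhds 0] fun z : ℂ => z)
    (hcfi : ContinuousAt fi 0) (hfi0 : fi 0 = 0)
    (hinv : ∀ᶠ z in nhds (0:ℂ), f (fi z) = z) :
    ((fun z => fi z - z) =o[nhds 0] fun z : ℂ => z) ∧ (fi =O[nhds (0:ℂ)] fun z => z) := by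
  have htfi : Tendsto fi (nhds 0) (nhds 0) := by
    have := hcfi.tendsto; rwa [hfi0] at this
  have h1 : (fun z => f (fi z) - fi z) =o[nhds 0] fun z => fi z := hfo.comp_tendsto htfi
  have h3 : (fun z => fi z - z) =o[nhds 0] fun z => fi z := by
    refine h1.neg_left.congr' ?_ EventuallyEq.rfl
    filter_upwards [hinv] with z hz
    rw [hz]; ring
  have h4 := isLittleO_iff.mp h3 (by norm_num : (0:ℝ) < 1/2)
  have h5 : fi =O[nhds (0:ℂ)] fun z => z := by
    rw [isBigO_iff]
    refine ⟨2, ?_⟩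
    filter_upwards [h4] with z hz
    have htri : ‖fi z‖ ≤ ‖fi z - z‖ + ‖z‖ := by
      calc ‖fi z‖ = ‖(fi z - z) + z‖ := by rw [sub_add_cancel]
      _ ≤ ‖fi z - z‖ + ‖z‖ := norm_add_le _ _
    linarith
  exact ⟨h3.trans_isBigO h5, h5⟩

end Helpers

open Topology Finset in
/-- If `f ∈ A_p`, `g ∈ A_q` with `p ≠ q` (nonzero leading
coefficients `a`, `b`), then the commutator `[f,g] = f ∘ g ∘ f⁻¹ ∘ g⁻¹` belongs
to `A_{p+q}`: it has the form `z + c z^(p+q+1) + o(z^(p+q+1))` with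
`c = a b (p - q) ≠ 0`. -/
theorem commutator_in_A_p_plus_q
    (f g fi gi : ℂ → ℂ) (a b : ℂ) (p q : ℕ) (hp : 1 ≤ p) (hq : 1 ≤ q)
    (ha : a ≠ 0) (hb : b ≠ 0) (hpq : p ≠ q)
    (hfa : AnalyticAt ℂ f 0) (hga : AnalyticAt ℂ g 0)
    (hfia : AnalyticAt ℂ fi 0) (hgia : AnalyticAt ℂ gi 0)
    (hf0 : f 0 = 0) (hg0 : g 0 = 0)
    (hfi : LocalInv f fi) (hgi : LocalInv g gi)
    (hf : (fun z => f z - (z + a * z ^ (p + 1))) =o[nhds 0] fun z => z ^ (p + 1))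
    (hg : (fun z => g z - (z + b * z ^ (q + 1))) =o[nhds 0] fun z => z ^ (q + 1)) :
    ∃ c : ℂ, c = a * b * ((p : ℂ) - q) ∧ c ≠ 0 ∧
      (fun z => f (g (fi (gi z))) - (z + c * z ^ (p + q + 1)))
        =o[nhds 0] fun z => z ^ (p + q + 1) := by
  obtain ⟨F, hFa, hF0, hfe⟩ := factor_A hfa hf
  obtain ⟨G, hGa, hG0, hge⟩ := factor_A hga hg
  set m : ℕ := p + q + 1 with hm
  set c : ℂ := a * b * ((p : ℂ) - q) with hc
  have hcne : c ≠ 0 := by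
    rw [hc]
    refine mul_ne_zero (mul_ne_zero ha hb) ?_
    rw [sub_ne_zero]
    exact_mod_cast fun h => hpq (Nat.cast_injective h)
  -- tangency of f, g to the identity
  have hFt : Tendsto F (nhds (0:ℂ)) (nhds a) := by
    have := hFa.continuousAt.tendsto; rwa [hF0] at this
  have hGt : Tendsto G (nhds (0:ℂ)) (nhds b) := by
    have := hGa.continuousAt.tendsto; rwa [hG0] at this
  have hfo : (fun z => f z - z) =o[nhds 0] fun z : ℂ => z := by
    refine (pow_mul_littleO_id hp hFt).congr' ?_ EventuallyEq.rfl
    filter_upwards [hfe] with z hz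
    rw [hz]; ring
  have hgo : (fun z => g z - z) =o[nhds 0] fun z : ℂ => z := by
    refine (pow_mul_littleO_id hq hGt).congr' ?_ EventuallyEq.rfl
    filter_upwards [hge] with z hz
    rw [hz]; ring
  -- fi and gi fix 0
  have hfi0 : fi 0 = 0 := by have := hfi.1.self_of_nhds; rwa [hf0] at this
  have hgi0 : gi 0 = 0 := by have := hgi.1.self_of_nhds; rwa [hg0] at this
  obtain ⟨dfi, Ofi⟩ := inv_tangent hfo hfia.continuousAt hfi0 hfi.2
  obtain ⟨dgi, Ogi⟩ := inv_tangent hgo hgia.continuousAt hgi0 hgi.2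
  have htfi : Tendsto fi (nhds 0) (nhds 0) := by
    have := hfia.continuousAt.tendsto; rwa [hfi0] at this
  have htgi : Tendsto gi (nhds 0) (nhds 0) := by
    have := hgia.continuousAt.tendsto; rwa [hgi0] at this
  have htw : Tendsto (fun z => fi (gi z)) (nhds (0:ℂ)) (nhds 0) := htfi.comp htgi
  -- w := fi ∘ gi is tangent to the identity
  have hw : (fun z => fi (gi z) - z) =o[nhds 0] fun z : ℂ => z := by
    have h1 : (fun z => fi (gi z) - gi z) =o[nhds 0] fun z : ℂ => z :=
      (dfi.comp_tendsto htgi).trans_isBigO Ogi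
    have h2 := h1.add dgi
    exact h2.congr_left fun z => by ring
  have OwO : (fun z => fi (gi z)) =O[nhds 0] fun z : ℂ => z := by
    have := hw.isBigO.add (isBigO_refl (fun z : ℂ => z) (nhds 0))
    exact this.congr_left fun z => by ring
  -- inverse identities
  have heq2 : ∀ᶠ z in nhds (0:ℂ), g (f (fi (gi z))) = z := by
    have heq1 : ∀ᶠ z in nhds (0:ℂ), f (fi (gi z)) = gi z := htgi.eventually hfi.2
    filter_upwards [heq1, hgi.2] with z h1 h2
    rw [h1]; exact h2
  -- main composition estimates
  have K := core_comm hp hq hFa hGa hF0 hG0 hfe hge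
  have K2 := K.comp_tendsto htw
  have K3 : (fun z => f (g (fi (gi z))) - g (f (fi (gi z))) - c * (fi (gi z)) ^ m)
      =o[nhds 0] fun z : ℂ => z ^ m := K2.trans_isBigO (OwO.pow m)
  have A2 : (fun z => (fi (gi z)) ^ m - z ^ m) =o[nhds 0] fun z : ℂ => z ^ m := by
    have S : (fun z => ∑ i ∈ range m, (fi (gi z)) ^ i * z ^ (m - 1 - i))
        =O[nhds 0] fun z : ℂ => z ^ (m - 1) := by
      refine IsBigO.fun_sum fun i hi => ?_
      have h1 := (OwO.pow i).mul (isBigO_refl (fun z : ℂ => z ^ (m - 1 - i)) (nhds 0))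
      have h2 : (fun z : ℂ => z ^ i * z ^ (m - 1 - i)) = fun z : ℂ => z ^ (m - 1) := by
        funext z; rw [← pow_add]; congr 1
        have := Finset.mem_range.mp hi; omega
      rwa [h2] at h1
    have h3 := S.mul_isLittleO hw
    have h4 : (fun z : ℂ => z ^ (m - 1) * z) = fun z : ℂ => z ^ m := by
      funext z; rw [← pow_succ, Nat.sub_add_cancel (by omega : 1 ≤ m)]
    rw [h4] at h3
    exact h3.congr_left (fun z => geom_sum₂_mul _ _ m)
  have final : ∀ᶠ z in nhds (0:ℂ), f (g (fi (gi z))) - (z + c * z ^ m)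
      = (f (g (fi (gi z))) - g (f (fi (gi z))) - c * (fi (gi z)) ^ m)
        + c * ((fi (gi z)) ^ m - z ^ m) := by
    filter_upwards [heq2] with z h2
    linear_combination h2
  have final' : (fun z => f (g (fi (gi z))) - (z + c * z ^ m)) =ᶠ[nhds (0:ℂ)]
      (fun z => (f (g (fi (gi z))) - g (f (fi (gi z))) - c * (fi (gi z)) ^ m)
        + c * ((fi (gi z)) ^ m - z ^ m)) := final
  exact ⟨c, rfl, hcne, ((K3.add (A2.const_mul_left c)).congr' final'.symm EventuallyEq.rfl)⟩
end

section
/- Let f, g be analytic germs fixing 0 with f'(0)² ≠ 1 and g'(0)² ≠ 1. Then the Schwarzian derivative of their commutator at 0 satisfies S([f,g])(0) = (S(f)(0)/(f'(0)² − 1) − S(g)(0)/(g'(0)² − 1)) · (1 − f'(0)^{−2}) · (1 − g'(0)^{−2}). -/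
open Filter Asymptotics

/-- The Schwarzian derivative `S(h) = h'''/h' - (3/2)(h''/h')²`. -/
noncomputable def Schw (h : ℂ → ℂ) (z : ℂ) : ℂ :=
  iteratedDeriv 3 h z / deriv h z - (3 / 2) * (iteratedDeriv 2 h z / deriv h z) ^ 2

private lemma analyticAt_deriv' {u : ℂ → ℂ} {x : ℂ} (h : AnalyticAt ℂ u x) :
    AnalyticAt ℂ (deriv u) x := by
  obtain ⟨s, hs, ha⟩ := h.exists_mem_nhds_analyticOnNhd
  exact ha.deriv x (mem_of_mem_nhds hs)

private lemma itd2 (h : ℂ → ℂ) : iteratedDeriv 2 h = deriv (deriv h) := by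
  rw [show (2:ℕ) = 1+1 from rfl, iteratedDeriv_succ, iteratedDeriv_one]

private lemma itd3 (h : ℂ → ℂ) : iteratedDeriv 3 h = deriv (deriv (deriv h)) := by
  rw [show (3:ℕ) = 2+1 from rfl, iteratedDeriv_succ, itd2]

/-- first derivative of composition -/
private lemma D1 {u v : ℂ → ℂ} (z : ℂ) (hu : AnalyticAt ℂ u (v z)) (hv : AnalyticAt ℂ v z) :
    deriv (u ∘ v) z = deriv u (v z) * deriv v z :=
  deriv_comp z hu.differentiableAt hv.differentiableAt

private lemma D2 {u v : ℂ → ℂ} (z : ℂ) (hu : AnalyticAt ℂ u (v z)) (hv : AnalyticAt ℂ v z) :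
    deriv (deriv (u ∘ v)) z =
      deriv (deriv u) (v z) * (deriv v z) ^ 2 + deriv u (v z) * deriv (deriv v) z := by
  have hev : deriv (u ∘ v) =ᶠ[nhds z] fun w => deriv u (v w) * deriv v w := by
    filter_upwards [hv.continuousAt.eventually hu.eventually_analyticAt,
      hv.eventually_analyticAt] with w h1 h2
    exact D1 w h1 h2
  rw [hev.deriv_eq]
  have H1 : HasDerivAt (fun w => deriv u (v w)) (deriv (deriv u) (v z) * deriv v z) z :=
    (analyticAt_deriv' hu).differentiableAt.hasDerivAt.comp z hv.differentiableAt.hasDerivAt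
  have H2 : HasDerivAt (fun w => deriv v w) (deriv (deriv v) z) z :=
    (analyticAt_deriv' hv).differentiableAt.hasDerivAt
  have := (H1.mul H2).deriv
  refine this.trans ?_; ring

private lemma D3 {u v : ℂ → ℂ} (z : ℂ) (hu : AnalyticAt ℂ u (v z)) (hv : AnalyticAt ℂ v z) :
    deriv (deriv (deriv (u ∘ v))) z =
      deriv (deriv (deriv u)) (v z) * (deriv v z) ^ 3 +
        3 * deriv (deriv u) (v z) * deriv v z * deriv (deriv v) z +
        deriv u (v z) * deriv (deriv (deriv v)) z := by
  have hev : deriv (deriv (u ∘ v)) =ᶠ[nhds z]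
      fun w => deriv (deriv u) (v w) * (deriv v w) ^ 2 + deriv u (v w) * deriv (deriv v) w := by
    filter_upwards [hv.continuousAt.eventually hu.eventually_analyticAt,
      hv.eventually_analyticAt] with w h1 h2
    exact D2 w h1 h2
  rw [hev.deriv_eq]
  have Hv : HasDerivAt v (deriv v z) z := hv.differentiableAt.hasDerivAt
  have H1 : HasDerivAt (fun w => deriv (deriv u) (v w))
      (deriv (deriv (deriv u)) (v z) * deriv v z) z :=
    (analyticAt_deriv' (analyticAt_deriv' hu)).differentiableAt.hasDerivAt.comp z Hv
  have H2 : HasDerivAt (fun w => deriv v w) (deriv (deriv v) z) z :=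
    (analyticAt_deriv' hv).differentiableAt.hasDerivAt
  have H3 : HasDerivAt (fun w => deriv u (v w)) (deriv (deriv u) (v z) * deriv v z) z :=
    (analyticAt_deriv' hu).differentiableAt.hasDerivAt.comp z Hv
  have H4 : HasDerivAt (fun w => deriv (deriv v) w) (deriv (deriv (deriv v)) z) z :=
    (analyticAt_deriv' (analyticAt_deriv' hv)).differentiableAt.hasDerivAt
  have := ((H1.mul (H2.pow 2)).add (H3.mul H4)).deriv
  refine this.trans ?_; simp only [Pi.pow_apply]; norm_num; ring

/-- relations between derivatives of a germ and its local inverse at `0` -/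
private lemma inv_rel {f fi : ℂ → ℂ} (hfa : AnalyticAt ℂ f 0) (hfia : AnalyticAt ℂ fi 0)
    (hf0 : f 0 = 0) (h : ∀ᶠ z in nhds (0:ℂ), fi (f z) = z) :
    fi 0 = 0 ∧ deriv fi 0 * deriv f 0 = 1 ∧
      deriv (deriv fi) 0 * (deriv f 0) ^ 2 + deriv fi 0 * deriv (deriv f) 0 = 0 ∧
      deriv (deriv (deriv fi)) 0 * (deriv f 0) ^ 3 +
        3 * deriv (deriv fi) 0 * deriv f 0 * deriv (deriv f) 0 +
        deriv fi 0 * deriv (deriv (deriv f)) 0 = 0 := by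
  have hcomp : (fi ∘ f) =ᶠ[nhds (0:ℂ)] id := h
  have hfi0 : fi 0 = 0 := by have := h.self_of_nhds; rwa [hf0] at this
  have hfia' : AnalyticAt ℂ fi (f 0) := by rw [hf0]; exact hfia
  have e1 : deriv (fi ∘ f) 0 = 1 := by rw [hcomp.deriv_eq]; simp
  rw [D1 0 hfia' hfa, hf0] at e1
  have e2 : deriv (deriv (fi ∘ f)) 0 = 0 := by
    rw [(hcomp.deriv).deriv_eq]; simp
  rw [D2 0 hfia' hfa, hf0] at e2
  have e3 : deriv (deriv (deriv (fi ∘ f))) 0 = 0 := by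
    rw [((hcomp.deriv).deriv).deriv_eq]; simp
  rw [D3 0 hfia' hfa, hf0] at e3
  exact ⟨hfi0, e1, e2, e3⟩

set_option maxHeartbeats 2000000 in
set_option maxHeartbeats 1000000 in
private lemma keyalg (A B P Q R S' : ℂ) (hA : A ≠ 0) (hB : B ≠ 0) :
    Q * (B * (1 / A * (1 / B))) ^ 3 +
          3 * P * (B * (1 / A * (1 / B))) *
            (R * (1 / A * (1 / B)) ^ 2 + B * (-P / A ^ 3 * (1 / B) ^ 2 + 1 / A * (-R / B ^ 3))) +
        A *
          (S' * (1 / A * (1 / B)) ^ 3 + 3 * R * (1 / A * (1 / B)) * (-P / A ^ 3 * (1 / B) ^ 2 + 1 / A * (-R / B ^ 3)) +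
            B *
              ((3 * P ^ 2 * A ^ 2 - Q * A ^ 3) / A ^ 7 * (1 / B) ^ 3 + 3 * (-P / A ^ 3) * (1 / B) * (-R / B ^ 3) +
                1 / A * ((3 * R ^ 2 * B ^ 2 - S' * B ^ 3) / B ^ 7))) -
      3 / 2 *
        (P * (B * (1 / A * (1 / B))) ^ 2 +
            A * (R * (1 / A * (1 / B)) ^ 2 + B * (-P / A ^ 3 * (1 / B) ^ 2 + 1 / A * (-R / B ^ 3)))) ^
          2 =
    ((Q / A - 3 / 2 * (P / A) ^ 2) * (B ^ 2 - 1) - (S' / B - 3 / 2 * (R / B) ^ 2) * (A ^ 2 - 1)) / (A ^ 2 * B ^ 2) := by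
  have hu : A * A⁻¹ = 1 := mul_inv_cancel₀ hA
  have hv : B * B⁻¹ = 1 := mul_inv_cancel₀ hB
  linear_combination ((1 : ℂ)*B⁻¹^3*S' + (-3/2 : ℂ)*B⁻¹^4*R^2 + (-3 : ℂ)*A⁻¹*B⁻¹^4*R^2 + (1 : ℂ)*A⁻¹^2*B⁻¹^3*S' + (-3/2 : ℂ)*A⁻¹^2*B⁻¹^4*R^2 + (-3 : ℂ)*A⁻¹^3*B⁻¹^3*P*R + (3 : ℂ)*B*A⁻¹*B⁻¹^5*R^2 + (3 : ℂ)*B*A⁻¹^2*B⁻¹^4*P*R + (-1 : ℂ)*B*A⁻¹^3*B⁻¹^3*Q + (3 : ℂ)*B*A⁻¹^3*B⁻¹^4*P*R + (3 : ℂ)*B*A⁻¹^4*B⁻¹^3*P^2 + (-3/2 : ℂ)*B^2*B⁻¹^6*R^2 + (-3 : ℂ)*B^2*A⁻¹^2*B⁻¹^5*P*R + (-3 : ℂ)*B^2*A⁻¹^3*B⁻¹^4*P*R + (-3/2 : ℂ)*B^2*A⁻¹^4*B⁻¹^4*P^2 + (3 : ℂ)*B^3*B⁻¹^7*R^2 +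 (3 : ℂ)*B^3*A⁻¹^2*B⁻¹^5*P*R + (3 : ℂ)*B^3*A⁻¹^4*B⁻¹^4*P^2 + (-1 : ℂ)*B^4*B⁻¹^7*S' + (1 : ℂ)*A*A⁻¹*B⁻¹^3*S' + (-3/2 : ℂ)*A*A⁻¹*B⁻¹^4*R^2 + (-3/2 : ℂ)*A*A⁻¹^3*B⁻¹^4*R^2 + (3 : ℂ)*A*B*A⁻¹^2*B⁻¹^5*R^2 + (-1 : ℂ)*A*B*A⁻¹^4*B⁻¹^3*Q + (3 : ℂ)*A*B*A⁻¹^4*B⁻¹^4*P*R + (3 : ℂ)*A*B*A⁻¹^5*B⁻¹^3*P^2 + (-3/2 : ℂ)*A*B^2*A⁻¹*B⁻¹^6*R^2 + (-3 : ℂ)*A*B^2*A⁻¹^3*B⁻¹^5*P*R + (-3/2 : ℂ)*A*B^2*A⁻¹^5*B⁻¹^4*P^2 + (-1 : ℂ)*A^2*B*A⁻¹^5*B⁻¹^3*Q + (3 : ℂ)*A^2*B*A⁻¹^6*B⁻¹^3*P^2 + (-1 : ℂ)*A^3*B*A⁻¹^6*B⁻¹^3*Q) * hu + ((-1 : ℂ)*B⁻¹^3*S'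 + (3/2 : ℂ)*B⁻¹^4*R^2 + (3 : ℂ)*A⁻¹*B⁻¹^4*R^2 + (-1 : ℂ)*A⁻¹^3*B⁻¹^2*Q + (3 : ℂ)*A⁻¹^3*B⁻¹^3*P*R + (3/2 : ℂ)*A⁻¹^4*B⁻¹^2*P^2 + (-1 : ℂ)*B*B⁻¹^4*S' + (3/2 : ℂ)*B*B⁻¹^5*R^2 + (-3 : ℂ)*B*A⁻¹^2*B⁻¹^4*P*R + (-3 : ℂ)*B*A⁻¹^3*B⁻¹^3*P*R + (-3/2 : ℂ)*B*A⁻¹^4*B⁻¹^3*P^2 + (-1 : ℂ)*B^2*B⁻¹^5*S' + (3 : ℂ)*B^2*B⁻¹^6*R^2 + (3 : ℂ)*B^2*A⁻¹^2*B⁻¹^4*P*R + (1 : ℂ)*B^2*A⁻¹^3*B⁻¹^2*Q + (-3/2 : ℂ)*B^2*A⁻¹^4*B⁻¹^2*P^2 + (3 : ℂ)*B^2*A⁻¹^4*B⁻¹^3*P^2 + (-1 : ℂ)*B^3*B⁻¹^6*S' + (-3/2 : ℂ)*B^3*A⁻¹^4*B⁻¹^3*P^2) * hv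

private lemma alg (X Y A B : ℂ) (hA : A ≠ 0) (hB : B ≠ 0)
    (hA1 : A ^ 2 - 1 ≠ 0) (hB1 : B ^ 2 - 1 ≠ 0) :
    (X / (A ^ 2 - 1) - Y / (B ^ 2 - 1)) * (1 - (A ^ 2)⁻¹) * (1 - (B ^ 2)⁻¹) =
      (X * (B ^ 2 - 1) - Y * (A ^ 2 - 1)) / (A ^ 2 * B ^ 2) := by
  field_simp

set_option maxHeartbeats 4000000 in
/-- For analytic germs `f, g` fixing `0` with `f'(0)² ≠ 1`,
`g'(0)² ≠ 1`, the Schwarzian derivative of the commutator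
`[f,g] = f ∘ g ∘ f⁻¹ ∘ g⁻¹` at `0` equals
`(S(f)(0)/(f'(0)²-1) - S(g)(0)/(g'(0)²-1)) (1 - f'(0)⁻²)(1 - g'(0)⁻²)`. -/
theorem schwarzian_of_commutator
    (f g fi gi : ℂ → ℂ)
    (hfa : AnalyticAt ℂ f 0) (hga : AnalyticAt ℂ g 0)
    (hfia : AnalyticAt ℂ fi 0) (hgia : AnalyticAt ℂ gi 0)
    (hf0 : f 0 = 0) (hg0 : g 0 = 0)
    (hf1 : (deriv f 0) ^ 2 ≠ 1) (hg1 : (deriv g 0) ^ 2 ≠ 1)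
    (hfi : LocalInv f fi) (hgi : LocalInv g gi) :
    Schw (fun z => f (g (fi (gi z)))) 0 =
      (Schw f 0 / ((deriv f 0) ^ 2 - 1) - Schw g 0 / ((deriv g 0) ^ 2 - 1)) *
        (1 - ((deriv f 0) ^ 2)⁻¹) * (1 - ((deriv g 0) ^ 2)⁻¹) := by
  obtain ⟨hfi0, Ef1, Ef2, Ef3⟩ := inv_rel hfa hfia hf0 hfi.1
  obtain ⟨hgi0, Eg1, Eg2, Eg3⟩ := inv_rel hga hgia hg0 hgi.1
  have hA0 : deriv f 0 ≠ 0 := by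
    intro h; rw [h, mul_zero] at Ef1; exact zero_ne_one Ef1
  have hB0 : deriv g 0 ≠ 0 := by
    intro h; rw [h, mul_zero] at Eg1; exact zero_ne_one Eg1
  have hA1 : (deriv f 0) ^ 2 - 1 ≠ 0 := sub_ne_zero.mpr hf1
  have hB1 : (deriv g 0) ^ 2 - 1 ≠ 0 := sub_ne_zero.mpr hg1
  -- solve for inverse derivatives
  have ha1 : deriv fi 0 = (deriv f 0)⁻¹ := eq_inv_of_mul_eq_one_left Ef1
  have ha2 : deriv (deriv fi) 0 = -deriv (deriv f) 0 / (deriv f 0) ^ 3 := by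
    rw [ha1] at Ef2
    field_simp at Ef2 ⊢
    linear_combination Ef2
  have ha3 : deriv (deriv (deriv fi)) 0 =
      (3 * (deriv (deriv f) 0) ^ 2 * (deriv f 0) ^ 2 -
        deriv (deriv (deriv f)) 0 * (deriv f 0) ^ 3) / (deriv f 0) ^ 7 := by
    rw [ha1, ha2] at Ef3
    field_simp at Ef3
    rw [eq_div_iff (pow_ne_zero 7 hA0)]
    linear_combination (deriv f 0) ^ 2 * Ef3
  have hb1 : deriv gi 0 = (deriv g 0)⁻¹ := eq_inv_of_mul_eq_one_left Eg1
  have hb2 : deriv (deriv gi) 0 = -deriv (deriv g) 0 / (deriv g 0) ^ 3 := by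
    rw [hb1] at Eg2
    field_simp at Eg2 ⊢
    linear_combination Eg2
  have hb3 : deriv (deriv (deriv gi)) 0 =
      (3 * (deriv (deriv g) 0) ^ 2 * (deriv g 0) ^ 2 -
        deriv (deriv (deriv g)) 0 * (deriv g 0) ^ 3) / (deriv g 0) ^ 7 := by
    rw [hb1, hb2] at Eg3
    field_simp at Eg3
    rw [eq_div_iff (pow_ne_zero 7 hB0)]
    linear_combination (deriv g 0) ^ 2 * Eg3
  -- analyticity at the relevant points
  have hfia' : AnalyticAt ℂ fi (gi 0) := by rw [hgi0]; exact hfia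
  have hw1a : AnalyticAt ℂ (fi ∘ gi) 0 := hfia'.comp hgia
  have hw10 : (fi ∘ gi) 0 = 0 := by simp [Function.comp, hgi0, hfi0]
  have hga' : AnalyticAt ℂ g ((fi ∘ gi) 0) := by rw [hw10]; exact hga
  have hw2a : AnalyticAt ℂ (g ∘ (fi ∘ gi)) 0 := hga'.comp hw1a
  have hw20 : (g ∘ (fi ∘ gi)) 0 = 0 := by simp [Function.comp, hgi0, hfi0, hg0]
  have hfa' : AnalyticAt ℂ f ((g ∘ (fi ∘ gi)) 0) := by rw [hw20]; exact hfa
  have hfun : (fun z => f (g (fi (gi z)))) = f ∘ (g ∘ (fi ∘ gi)) := rfl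
  rw [hfun]
  simp only [Schw, itd2, itd3]
  rw [D1 0 hfa' hw2a, D2 0 hfa' hw2a, D3 0 hfa' hw2a, hw20,
    D1 0 hga' hw1a, D2 0 hga' hw1a, D3 0 hga' hw1a, hw10,
    D1 0 hfia' hgia, D2 0 hfia' hgia, D3 0 hfia' hgia, hgi0]
  have hD : deriv f 0 * (deriv g 0 * (deriv fi 0 * deriv gi 0)) = 1 := by
    rw [ha1, hb1]; field_simp
  have ha1' : deriv fi 0 = 1 / deriv f 0 := by rw [ha1, inv_eq_one_div]
  have hb1' : deriv gi 0 = 1 / deriv g 0 := by rw [hb1, inv_eq_one_div]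
  rw [hD, div_one, div_one, alg _ _ _ _ hA0 hB0 hA1 hB1, ha1', ha2, ha3, hb1', hb2, hb3]
  exact keyalg (deriv f 0) (deriv g 0) (deriv (deriv f) 0) (deriv (deriv (deriv f)) 0)
    (deriv (deriv g) 0) (deriv (deriv (deriv g)) 0) hA0 hB0
end

section
/- Let c₁, …, c_n be cycles whose multipliers μ(c_j) ∈ ℂ satisfy 0 < |μ(c_j)| < |μ(c₁) ⋯ μ(c_{j−1})| for every j (in particular |μ(c₁)| < 1). Then for any nonempty finite set of indices i₁ < i₂ < … < i_s and any signs ε₁, …, ε_s ∈ {±1}, the relation μ(c_{i₁})^{ε₁} ⋯ μ(c_{i_{s−1}})^{ε_{s−1}} = μ(c_{i_s}) is impossible. -/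
open Finset

/-- Lemma 9, multiplier inequality: let `μ j` (`j = 0, 1, …`) be
multipliers of cycles with `0 < |μ j| < ∏_{k<j} |μ k|` for every `j` (for
`j = 0` this reads `|μ 0| < 1`).  Then for any strictly increasing tuple of
indices `i₀ < i₁ < … < i_s` and any signs `ε t ∈ {1, -1}`, the relation
`μ(i₀)^{ε₀} ⋯ μ(i_{s-1})^{ε_{s-1}} = μ(i_s)` is impossible. -/
theorem multiplier_relation_impossible
    (μ : ℕ → ℂ)
    (hpos : ∀ j, 0 < ‖μ j‖)
    (hlt : ∀ j, ‖μ j‖ < ∏ k ∈ Finset.range j, ‖μ k‖)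
    (s : ℕ) (i : Fin (s + 1) → ℕ) (hi : StrictMono i)
    (ε : Fin s → ℤ) (hε : ∀ t, ε t = 1 ∨ ε t = -1) :
    ∏ t : Fin s, μ (i t.castSucc) ^ (ε t) ≠ μ (i (Fin.last s)) := by
  intro h
  -- all multipliers have modulus < 1
  have habs1 : ∀ j, ‖μ j‖ < 1 := by
    intro j
    induction j using Nat.strong_induction_on with
    | _ j ih =>
      refine lt_of_lt_of_le (hlt j) ?_
      exact Finset.prod_le_one (fun k _ => norm_nonneg _)
        (fun k hk => le_of_lt (ih k (Finset.mem_range.mp hk)))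
  -- the image of the first s indices inside range (i last)
  set T : Finset ℕ := Finset.image (fun t : Fin s => i t.castSucc) Finset.univ with hT
  have hsub : T ⊆ Finset.range (i (Fin.last s)) := by
    intro x hx
    simp only [hT, Finset.mem_image, Finset.mem_univ, true_and] at hx
    obtain ⟨t, rfl⟩ := hx
    exact Finset.mem_range.mpr (hi (Fin.castSucc_lt_last t))
  have hrange_le : ∏ k ∈ Finset.range (i (Fin.last s)), ‖μ k‖
      ≤ ∏ k ∈ T, ‖μ k‖ := by
    rw [← Finset.prod_sdiff hsub]
    have h1 : ∏ k ∈ Finset.range (i (Fin.last s)) \ T, ‖μ k‖ ≤ 1 :=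
      Finset.prod_le_one (fun k _ => norm_nonneg _)
        (fun k _ => le_of_lt (habs1 k))
    have h2 : (0:ℝ) ≤ ∏ k ∈ T, ‖μ k‖ :=
      Finset.prod_nonneg (fun k _ => norm_nonneg _)
    nlinarith
  have hinj : Function.Injective (fun t : Fin s => i t.castSucc) := by
    intro a b hab
    exact Fin.castSucc_injective s (hi.injective hab)
  have hTprod : ∏ k ∈ T, ‖μ k‖
      = ∏ t : Fin s, ‖μ (i t.castSucc)‖ := by
    rw [hT, Finset.prod_image (fun a _ b _ hab => hinj hab)]
  have hsigned : ∏ t : Fin s, ‖μ (i t.castSucc)‖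
      ≤ ∏ t : Fin s, ‖μ (i t.castSucc)‖ ^ (ε t) := by
    apply Finset.prod_le_prod (fun t _ => norm_nonneg _)
    intro t _
    rcases hε t with h1 | h1
    · rw [h1]; simp
    · rw [h1]
      simp only [zpow_neg, zpow_one]
      have ha : 0 < ‖μ (i t.castSucc)‖ := hpos _
      have hb : ‖μ (i t.castSucc)‖ ≤ 1 := le_of_lt (habs1 _)
      exact hb.trans ((one_le_inv₀ ha).mpr hb)
  have habseq : ‖∏ t : Fin s, μ (i t.castSucc) ^ (ε t)‖
      = ∏ t : Fin s, ‖μ (i t.castSucc)‖ ^ (ε t) := by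
    rw [norm_prod]
    exact Finset.prod_congr rfl (fun t _ => norm_zpow _ _)
  have hfinal := hlt (i (Fin.last s))
  rw [h] at habseq
  rw [habseq] at hfinal
  rw [hTprod] at hrange_le
  linarith
end

section
/- Let D be a nonempty set, g₁, g₂ : D → D two injective maps with disjoint images (g₁(D) ∩ g₂(D) = ∅), and suppose every composition g_{w₁} ∘ ⋯ ∘ g_{w_m} (w_i ∈ {1,2}) has at least one fixed point in D. Let Σ ⊂ D be a finite subset. Then for every sufficiently large m there exists a word w ∈ {1,2}^m and a periodic orbit p₀, p₁, …, p_m = p₀ with p_{i+1} = g_{w_{i+1}}(p_i), such that no p_i lies in Σ. -/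
namespace PeriodicOrbitAux

variable {D : Type*} (g : Fin 2 → D → D)

/-- Apply `g (w 0)`, then `g (w 1)`, ..., then `g (w (k-1))`. -/
def orbFun (w : ℕ → Fin 2) : ℕ → D → D
  | 0, p => p
  | (k+1), p => g (w k) (orbFun w k p)

lemma orbFun_add (w : ℕ → Fin 2) (a b : ℕ) (p : D) :
    orbFun g w (a + b) p = orbFun g (fun j => w (a + j)) b (orbFun g w a p) := by
  induction b with
  | zero => rfl
  | succ b ih =>
    rw [← Nat.add_assoc]
    show g (w (a + b)) (orbFun g w (a + b) p) = g (w (a + b)) _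
    rw [ih]

lemma orbFun_congr {w w' : ℕ → Fin 2} (k : ℕ) (h : ∀ j < k, w j = w' j) (p : D) :
    orbFun g w k p = orbFun g w' k p := by
  induction k with
  | zero => rfl
  | succ k ih =>
    show g (w k) _ = g (w' k) _
    rw [h k (by omega), ih (fun j hj => h j (by omega))]

lemma orbFun_eq_foldr (w : ℕ → Fin 2) (k : ℕ) (p : D) :
    orbFun g w k p
      = ((List.ofFn fun j : Fin k => w j).reverse).foldr (fun i x => g i x) p := by
  induction k with
  | zero => rfl
  | succ k ih =>
    rw [List.ofFn_succ']
    show g (w k) (orbFun g w k p) = _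
    rw [List.concat_eq_append, List.reverse_append]
    simp only [List.reverse_singleton, List.singleton_append, List.foldr_cons,
      Fin.val_last, Fin.coe_castSucc]
    rw [ih]

lemma foldr_inj
    (hinj : ∀ i, Function.Injective (g i))
    (hdisj : Set.range (g 0) ∩ Set.range (g 1) = ∅) :
    ∀ l l' : List (Fin 2), l.length = l'.length → ∀ q : D,
      l.foldr (fun i x => g i x) q = l'.foldr (fun i x => g i x) q → l = l' := by
  intro l
  induction l with
  | nil =>
    intro l' h _ _
    cases l' with
    | nil => rfl
    | cons b l' => simp at h
  | cons a l ih =>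
    intro l' hlen q heq
    cases l' with
    | nil => simp at hlen
    | cons b l' =>
      simp only [List.foldr_cons] at heq
      have key : ∀ x y : D, g 0 x ≠ g 1 y := by
        intro x y hxy
        have hz : g 0 x ∈ Set.range (g 0) ∩ Set.range (g 1) :=
          ⟨⟨x, rfl⟩, ⟨y, hxy.symm⟩⟩
        rw [hdisj] at hz
        exact hz
      have hab : a = b := by
        fin_cases a <;> fin_cases b
        · rfl
        · exact absurd heq (key _ _)
        · exact absurd heq.symm (key _ _)
        · rfl
      subst hab
      have := hinj a heq
      have hll : l = l' := ih l' (by simpa using hlen) q this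
      rw [hll]

lemma orbFun_fix_unique
    (hinj : ∀ i, Function.Injective (g i))
    (hdisj : Set.range (g 0) ∩ Set.range (g 1) = ∅)
    {w w' : ℕ → Fin 2} {k : ℕ} {q : D}
    (h : orbFun g w k q = q) (h' : orbFun g w' k q = q) : ∀ j < k, w j = w' j := by
  have hrev : ((List.ofFn fun j : Fin k => w j).reverse)
      = ((List.ofFn fun j : Fin k => w' j).reverse) := by
    apply foldr_inj g hinj hdisj _ _ (by simp) q
    rw [← orbFun_eq_foldr, ← orbFun_eq_foldr, h, h']
  have hl : (List.ofFn fun j : Fin k => w j) = List.ofFn fun j : Fin k => w' j :=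
    List.reverse_injective hrev
  intro j hj
  have := List.ofFn_inj.mp hl
  exact congrFun this ⟨j, hj⟩

lemma lin_lt_two_pow (c : ℕ) : ∀ m, 2 * (c + 1) ≤ m → c * m < 2 ^ m := by
  intro m hm
  induction m, hm using Nat.le_induction with
  | base =>
    have h1 : c + 1 ≤ 2 ^ c := by have := Nat.lt_two_pow_self (n := c); omega
    have e : 2 ^ (2 * (c + 1)) = 2 ^ c * 2 ^ c * 4 := by
      rw [show 2 * (c + 1) = c + (c + 2) by ring, pow_add, pow_add]
      ring
    rw [e]
    nlinarith
  | succ m hm ih =>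
    have h1 : c < 2 ^ m := lt_of_le_of_lt (by omega) (Nat.lt_two_pow_self (n := m))
    have h2 : 2 ^ (m + 1) = 2 ^ m + 2 ^ m := by ring
    have h3 : c * (m + 1) = c * m + c := by ring
    omega

end PeriodicOrbitAux

open PeriodicOrbitAux in
/-- combinatorial core of Lemma 10: let `g 0, g 1 : D → D` be
injective with disjoint images, such that every nonempty composition
`g w₁ ∘ ⋯ ∘ g w_m` has a fixed point.  Then for every finite `Σ ⊂ D` and every
sufficiently large `m` there is a word `w` of length `m` and a periodic orbit
`p 0, p 1, …, p m = p 0` with `p (i+1) = g (w i) (p i)` avoiding `Σ`. -/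
theorem periodic_orbit_avoiding_finite_set
    (D : Type*) (g : Fin 2 → D → D)
    (hinj : ∀ i, Function.Injective (g i))
    (hdisj : Set.range (g 0) ∩ Set.range (g 1) = ∅)
    (hfix : ∀ w : List (Fin 2), w ≠ [] →
      ∃ p : D, w.foldr (fun i x => g i x) p = p)
    (Sig : Finset D) :
    ∃ M : ℕ, ∀ m ≥ M, ∃ w : ℕ → Fin 2, ∃ p : ℕ → D,
      1 ≤ m ∧
      (∀ i < m, p (i + 1) = g (w i) (p i)) ∧
      p m = p 0 ∧
      ∀ i ≤ m, p i ∉ Sig := by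
  classical
  refine ⟨2 * (Sig.card + 1), ?_⟩
  intro m hm
  have hm1 : 1 ≤ m := by omega
  have hcount : Sig.card * m < 2 ^ m := lin_lt_two_pow Sig.card m hm
  obtain ⟨d0, _⟩ := hfix [0] (by simp)
  -- extend a word of length m to ℕ → Fin 2
  set ext : (Fin m → Fin 2) → ℕ → Fin 2 :=
    fun v j => if h : j < m then v ⟨j, h⟩ else 0 with hext
  -- choose a fixed point for every word of length m
  have hfix' : ∀ v : Fin m → Fin 2, ∃ p : D, orbFun g (ext v) m p = p := by
    intro v
    obtain ⟨p, hp⟩ := hfix ((List.ofFn fun j : Fin m => ext v j).reverse)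
      (by
        intro hcon
        apply_fun List.length at hcon
        simp at hcon
        omega)
    exact ⟨p, by rw [orbFun_eq_foldr]; exact hp⟩
  choose p0 hp0 using hfix'
  set orb : (Fin m → Fin 2) → ℕ → D := fun v i => orbFun g (ext v) i (p0 v) with horb
  -- rotation of a word by i
  set rot : (Fin m → Fin 2) → ℕ → ℕ → Fin 2 :=
    fun v i j => if j < m - i then ext v (i + j) else ext v (j - (m - i)) with hrot
  -- every orbit point is a fixed point of the rotated word
  have hrotfix : ∀ v, ∀ i ≤ m, orbFun g (rot v i) m (orb v i) = orb v i := by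
    intro v i hi
    have hmi : (m - i) + i = m := by omega
    have h1 := orbFun_add g (rot v i) (m - i) i (orb v i)
    rw [hmi] at h1
    have hinner : orbFun g (rot v i) (m - i) (orb v i) = p0 v := by
      have hc : orbFun g (rot v i) (m - i) (orb v i)
          = orbFun g (fun j => ext v (i + j)) (m - i) (orb v i) := by
        apply orbFun_congr
        intro j hj
        simp only [hrot, if_pos hj]
      have h2 := orbFun_add g (ext v) i (m - i) (p0 v)
      rw [show i + (m - i) = m by omega] at h2
      rw [hc, horb, ← h2, hp0 v]
    have houter : orbFun g (fun j => rot v i ((m - i) + j)) i (p0 v) = orb v i := by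
      have hc : orbFun g (fun j => rot v i ((m - i) + j)) i (p0 v)
          = orbFun g (ext v) i (p0 v) := by
        apply orbFun_congr
        intro j hj
        simp only [hrot]
        rw [if_neg (by omega), show (m - i) + j - (m - i) = j by omega]
      rw [hc, horb]
    rw [h1, hinner, houter]
  -- counting bad words
  set Bad : Finset (Fin m → Fin 2) :=
    Finset.univ.filter (fun v => ∃ i, i < m ∧ orb v i ∈ Sig) with hBad
  have hBadmem : ∀ v ∈ Bad, ∃ i, i < m ∧ orb v i ∈ Sig := by
    intro v hv
    simpa [hBad] using hv
  have hcardBad : Bad.card ≤ Sig.card * m := by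
    choose idx hidx1 hidx2 using hBadmem
    have hcard' : (Sig ×ˢ Finset.range m).card = Sig.card * m := by
      simp [Finset.card_product]
    rw [← hcard']
    apply Finset.card_le_card_of_injOn
      (fun v => if h : v ∈ Bad then (orb v (idx v h), idx v h) else (d0, 0))
    · intro v hv
      simp only [Finset.mem_coe] at hv ⊢
      simp only [dif_pos hv, Finset.mem_product, Finset.mem_range]
      exact ⟨hidx2 v hv, hidx1 v hv⟩
    · intro v hv v' hv' heq
      simp only [Finset.mem_coe] at hv hv'
      simp only [dif_pos hv, dif_pos hv', Prod.mk.injEq] at heq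
      obtain ⟨hq, hi⟩ := heq
      have hf1 := hrotfix v (idx v hv) (le_of_lt (hidx1 v hv))
      have hf2 := hrotfix v' (idx v' hv') (le_of_lt (hidx1 v' hv'))
      rw [← hi] at hf2 hq
      rw [← hq] at hf2
      set i := idx v hv with hidef
      have hagree : ∀ j < m, rot v i j = rot v' i j :=
        orbFun_fix_unique g hinj hdisj hf1 hf2
      have him : i < m := hidx1 v hv
      funext k
      have hk : (k : ℕ) < m := k.isLt
      by_cases hki : i ≤ (k : ℕ)
      · have hj : (k : ℕ) - i < m := by omega
        have := hagree ((k : ℕ) - i) hj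
        simp only [hrot] at this
        rw [if_pos (by omega), if_pos (by omega)] at this
        rw [show i + ((k : ℕ) - i) = (k : ℕ) by omega] at this
        simp only [hext] at this
        rw [dif_pos hk, dif_pos hk] at this
        simpa using this
      · have hj : (k : ℕ) + (m - i) < m := by omega
        have := hagree ((k : ℕ) + (m - i)) hj
        simp only [hrot] at this
        rw [if_neg (by omega), if_neg (by omega)] at this
        rw [show (k : ℕ) + (m - i) - (m - i) = (k : ℕ) by omega] at this
        simp only [hext] at this
        rw [dif_pos hk, dif_pos hk] at this
        simpa using this
  -- there is a good word
  have hne : ∃ v : Fin m → Fin 2, v ∉ Bad := by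
    by_contra hcon
    push_neg at hcon
    have hBaduniv : Bad = Finset.univ := Finset.eq_univ_iff_forall.mpr hcon
    have : (Finset.univ : Finset (Fin m → Fin 2)).card ≤ Sig.card * m := by
      rw [← hBaduniv]; exact hcardBad
    rw [Finset.card_univ] at this
    simp [Fintype.card_fun] at this
    omega
  obtain ⟨v, hv⟩ := hne
  have hgood : ∀ i < m, orb v i ∉ Sig := by
    intro i hi hmem
    exact hv (by simp [hBad]; exact ⟨i, hi, hmem⟩)
  refine ⟨ext v, orb v, hm1, ?_, ?_, ?_⟩
  · intro i _
    rfl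
  · exact hp0 v
  · intro i hi hmem
    rcases eq_or_lt_of_le hi with rfl | hlt
    · have h0 : orb v i = orb v 0 := hp0 v
      exact hgood 0 (by omega) (by rwa [← h0])
    · exact hgood i hlt hmem
end
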